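/- Lemma (excluding time-predecessors in IC3): Suppose the transition system satisfies: (a) every state in a path satisfies a convex invariant Inv, (b) paths have the form: an initial state, one time elapse step, then n combined (discrete + time elapse) steps, and (c) states in the same region are forward bisimilar and region-respecting for Inv. If no state in the region of a valid state s is reachable by such a path, then no valid state u with u ≾ s (in a time-predecessor region of s) is reachable by such a path either. -/

import Mathlib

noncomputable def fracPart (a : ℝ) : ℝ := a - ⌊a⌋

def RegionEquiv {C : Type*} (M : C → ℕ) (v w : C → ℝ) : Prop :=
  ∀ c d : C,
    (⌊v c⌋ = ⌊w c⌋ ∨ ((M c : ℝ) < v c ∧ (M c : ℝ) < w c)) ∧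
    (v c ≤ (M c : ℝ) → (fracPart (v c) = 0 ↔ fracPart (w c) = 0)) ∧
    (v c ≤ (M c : ℝ) → v d ≤ (M d : ℝ) →
      (fracPart (v c) ≤ fracPart (v d) ↔ fracPart (w c) ≤ fracPart (w d)))

abbrev TState (D X C : Type*) := (X → D) × (C → ℝ)

def shift {D X C : Type*} (s : TState D X C) (δ : ℝ) : TState D X C :=
  (s.1, fun c => s.2 c + δ)

/-- Time elapse step of duration δ, with all intermediate states valid. -/
def Elapse {D X C : Type*} (Inv : TState D X C → Prop) (s u : TState D X C) : Prop :=
  ∃ δ : ℝ, 0 ≤ δ ∧ u = shift s δ ∧ ∀ μ : ℝ, 0 < μ → μ ≤ δ → Inv (shift s μ)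

def steps {α : Type*} (R : α → α → Prop) : ℕ → α → α → Prop
  | 0, a, b => a = b
  | n + 1, a, c => ∃ b, R a b ∧ steps R n b c

/-- A combined step: one discrete step followed by one time elapse step. -/
def Combined {D X C : Type*} (Discrete : TState D X C → TState D X C → Prop)
    (Inv : TState D X C → Prop) (s u : TState D X C) : Prop :=
  ∃ m, Discrete s m ∧ Elapse Inv m u

/-- Two states are region equivalent: equal discrete part, region-equivalent clocks. -/
def SEquiv {D X C : Type*} (M : C → ℕ) (s u : TState D X C) : Prop :=
  s.1 = u.1 ∧ RegionEquiv M s.2 u.2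

/-- u is in a time-predecessor region of s. -/
def STimePred {D X C : Type*} (M : C → ℕ) (u s : TState D X C) : Prop :=
  u.1 = s.1 ∧ ∃ δ : ℝ, 0 ≤ δ ∧ RegionEquiv M (fun c => u.2 c + δ) s.2

/-- Reachable by a path: initial state, one time elapse step, then n combined steps. -/
def ReachN {D X C : Type*} (Init Inv : TState D X C → Prop)
    (Discrete : TState D X C → TState D X C → Prop) (n : ℕ) (s : TState D X C) : Prop :=
  ∃ s0 t, Init s0 ∧ Elapse Inv s0 t ∧ steps (Combined Discrete Inv) n t s


lemma shift_shift {D X C : Type*} (a : TState D X C) (d1 d2 : ℝ) :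
    shift (shift a d1) d2 = shift a (d1 + d2) := by
  simp [shift, add_assoc]

lemma elapse_trans {D X C : Type*} (Inv : TState D X C → Prop) {a b c : TState D X C}
    (h1 : Elapse Inv a b) (h2 : Elapse Inv b c) : Elapse Inv a c := by
  obtain ⟨d1, hd1, rfl, hi1⟩ := h1
  obtain ⟨d2, hd2, rfl, hi2⟩ := h2
  refine ⟨d1 + d2, by linarith, ?_, ?_⟩
  · rw [shift_shift]
  · intro μ hμ hμd
    rcases le_or_gt μ d1 with h | h
    · exact hi1 μ hμ h
    · have : shift a μ = shift (shift a d1) (μ - d1) := by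
        rw [shift_shift]; ring_nf
      rw [this]
      exact hi2 (μ - d1) (by linarith) (by linarith)

lemma steps_elapse {D X C : Type*} (Inv : TState D X C → Prop)
    (Discrete : TState D X C → TState D X C → Prop) :
    ∀ n {t u w : TState D X C}, steps (Combined Discrete Inv) (n+1) t u →
      Elapse Inv u w → steps (Combined Discrete Inv) (n+1) t w := by
  intro n
  induction n with
  | zero =>
    rintro t u w ⟨b, ⟨m, hd, he⟩, hb⟩ hw
    obtain rfl : b = u := hb
    exact ⟨w, ⟨m, hd, elapse_trans Inv he hw⟩, rfl⟩
  | succ k ih =>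
    rintro t u w ⟨b, hc, hb⟩ hw
    exact ⟨b, hc, ih hb hw⟩

lemma reach_elapse {D X C : Type*} (Init Inv : TState D X C → Prop)
    (Discrete : TState D X C → TState D X C → Prop) {n : ℕ} {u w : TState D X C}
    (h : ReachN Init Inv Discrete n u) (he : Elapse Inv u w) :
    ReachN Init Inv Discrete n w := by
  obtain ⟨s0, t, h0, hel, hst⟩ := h
  cases n with
  | zero => obtain rfl : t = u := hst; exact ⟨s0, w, h0, elapse_trans Inv hel he, rfl⟩
  | succ k => exact ⟨s0, t, h0, hel, steps_elapse Inv Discrete k hst he⟩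

theorem exclude_time_predecessors {D X C : Type*} (M : C → ℕ)
    (Init Inv : TState D X C → Prop)
    (Discrete : TState D X C → TState D X C → Prop)
    (hconv : ∀ (s : TState D X C) (δ η : ℝ), 0 ≤ η → η ≤ δ →
      Inv s → Inv (shift s δ) → Inv (shift s η))
    (hresp : ∀ s u, SEquiv M s u → (Inv s ↔ Inv u))
    (hbisim : ∀ s s' u, (Discrete s s' ∨ Elapse Inv s s') → SEquiv M s u →
      ∃ u', (Discrete u u' ∨ Elapse Inv u u') ∧ SEquiv M s' u')
    (n : ℕ) (s : TState D X C) (hsInv : Inv s)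
    (hunreach : ∀ t, SEquiv M t s → ¬ ReachN Init Inv Discrete n t) :
    ∀ u, Inv u → STimePred M u s → ¬ ReachN Init Inv Discrete n u := by
  rintro u hu ⟨heq, δ, hδ, hreq⟩ hreach
  set w := shift u δ with hw
  have hSE : SEquiv M w s := ⟨heq, hreq⟩
  have hwInv : Inv w := (hresp w s hSE).mpr hsInv
  have hel : Elapse Inv u w :=
    ⟨δ, hδ, rfl, fun μ hμ hμδ => hconv u δ μ hμ.le hμδ hu hwInv⟩
  exact hunreach w hSE (reach_elapse Init Inv Discrete hreach hel)
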